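/- With the notation of the component sets C_δ: let J be a connected component of C_δ(a_1,…,a_s,0) and suppose f^{s+i}(J) ∩ 𝒞_{s+i} = ∅ for 1 ≤ i ≤ n. Then for each 1 ≤ i ≤ n, the number of connected components of C_δ(a_1,…,a_s,0^{i+1}) contained in J is at most i+1, where 0^{i+1} denotes that the last i+1 symbols equal 0. -/

import Mathlib

open Set

noncomputable section

/-- `comp f n = f_{n-1} ∘ ⋯ ∘ f_0`, with `comp f 0 = id`. -/
def comp (f : ℕ → ℝ → ℝ) : ℕ → ℝ → ℝ
  | 0 => id
  | (n + 1) => f n ∘ comp f n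

/-- The critical set `𝒞_k` of `f_k` inside the interval `I`. -/
def crit (f : ℕ → ℝ → ℝ) (I : Set ℝ) (k : ℕ) : Set ℝ :=
  {x ∈ I | deriv (f k) x = 0}

/-- `T f I i x`: the maximal (pre)interval in `I` containing `x` such that
`f^j` of it avoids `𝒞_j` for all `j < i`. -/
def T (f : ℕ → ℝ → ℝ) (I : Set ℝ) (i : ℕ) (x : ℝ) : Set ℝ :=
  ⋃₀ {S | S ⊆ I ∧ IsPreconnected S ∧ x ∈ S ∧
      ∀ j < i, ∀ y ∈ S, comp f j y ∉ crit f I j}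

/-- `r f I i x`: the minimum of the lengths of the images under `f^i` of the
two connected components of `T f I i x \ {x}`. -/
def r (f : ℕ → ℝ → ℝ) (I : Set ℝ) (i : ℕ) (x : ℝ) : ℝ :=
  min (Metric.diam (comp f i '' (T f I i x ∩ Iio x)))
      (Metric.diam (comp f i '' (T f I i x ∩ Ioi x)))

/-- The set `C_δ(a_1,…,a_s)` attached to a binary word `w` (here `true = 1`, `false = 0`):
`r_i(x) ≥ δ` at positions with symbol `1`, and `0 < r_i(x) < δ` at positions with symbol `0`. -/
def Cword (f : ℕ → ℝ → ℝ) (I : Set ℝ) (δ : ℝ) (w : List Bool) : Set ℝ :=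
  {x ∈ I | ∀ i < w.length,
    (w.getD i false = true → δ ≤ r f I (i + 1) x) ∧
    (w.getD i false = false → 0 < r f I (i + 1) x ∧ r f I (i + 1) x < δ)}

/-- The number of connected components of a subset of `ℝ`. -/
def compCount (S : Set ℝ) : ℕ :=
  Set.ncard {K : Set ℝ | ∃ y ∈ S, K = connectedComponentIn S y}

/-! ### Auxiliary lemmas -/

/-- The set of connected components of a set of reals. -/
def compsSet (S : Set ℝ) : Set (Set ℝ) := {K | ∃ z ∈ S, K = connectedComponentIn S z}

lemma ccIn_inter_ordConnected (S D : Set ℝ) (hD : D.OrdConnected) (z : ℝ) (hz : z ∈ S ∩ D) :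
    connectedComponentIn (S ∩ D) z = connectedComponentIn S z ∩ D := by
  apply subset_antisymm
  · exact subset_inter (connectedComponentIn_mono z inter_subset_left)
      ((connectedComponentIn_subset _ _).trans inter_subset_right)
  · have hpre : IsPreconnected (connectedComponentIn S z ∩ D) := by
      rw [isPreconnected_iff_ordConnected]
      exact (isPreconnected_iff_ordConnected.mp isPreconnected_connectedComponentIn).inter hD
    exact hpre.subset_connectedComponentIn ⟨mem_connectedComponentIn hz.1, hz.2⟩
      (inter_subset_inter_left D (connectedComponentIn_subset _ _))

lemma ccIn_diff_eq (S M : Set ℝ) (hM : M.OrdConnected) (m : ℝ) (hm : m ∈ M)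
    (D : Set ℝ) (hDdef : D = {x | x < m ∧ x ∉ M} ∨ D = {x | m < x ∧ x ∉ M})
    (z : ℝ) (hz : z ∈ S ∩ D) :
    connectedComponentIn (S \ M) z = connectedComponentIn (S ∩ D) z := by
  have hSD : S ∩ D ⊆ S \ M := by
    rintro x ⟨hxS, hxD⟩
    rcases hDdef with h | h <;> (rw [h] at hxD; exact ⟨hxS, hxD.2⟩)
  apply subset_antisymm
  · set K := connectedComponentIn (S \ M) z with hK
    have hKpre : IsPreconnected K := isPreconnected_connectedComponentIn
    have hKo : K.OrdConnected := isPreconnected_iff_ordConnected.mp hKpre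
    have hKsub : K ⊆ S \ M := connectedComponentIn_subset _ _
    have hzK : z ∈ K := mem_connectedComponentIn (hSD hz)
    have hKD : K ⊆ D := by
      intro b hb
      have hbM : b ∉ M := (hKsub hb).2
      rcases hDdef with h | h
      · rw [h] at hz ⊢
        refine ⟨?_, hbM⟩
        by_contra hmb
        push_neg at hmb
        have hmb' : m < b := lt_of_le_of_ne hmb (fun he => hbM (he ▸ hm))
        have : m ∈ K := hKo.out' hzK hb ⟨le_of_lt hz.2.1, le_of_lt hmb'⟩
        exact (hKsub this).2 hm
      · rw [h] at hz ⊢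
        refine ⟨?_, hbM⟩
        by_contra hmb
        push_neg at hmb
        have hmb' : b < m := lt_of_le_of_ne hmb (fun he => hbM (he ▸ hm))
        have : m ∈ K := hKo.out' hb hzK ⟨le_of_lt hmb', le_of_lt hz.2.1⟩
        exact (hKsub this).2 hm
    exact hKpre.subset_connectedComponentIn hzK
      (subset_inter (fun x hx => (hKsub hx).1) hKD)
  · exact connectedComponentIn_mono z hSD

lemma lowD_ordConnected (M : Set ℝ) (hM : M.OrdConnected) (m : ℝ) (hm : m ∈ M) :
    ({x | x < m ∧ x ∉ M} : Set ℝ).OrdConnected := by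
  constructor
  intro x hx y hy z hz
  refine ⟨lt_of_le_of_lt hz.2 hy.1, fun hzM => hx.2 ?_⟩
  exact False.elim (hy.2 (hM.out' hzM hm ⟨hz.2, le_of_lt hy.1⟩ : y ∈ M))

lemma highU_ordConnected (M : Set ℝ) (hM : M.OrdConnected) (m : ℝ) (hm : m ∈ M) :
    ({x | m < x ∧ x ∉ M} : Set ℝ).OrdConnected := by
  constructor
  intro x hx y hy z hz
  refine ⟨lt_of_lt_of_le hx.1 hz.1, fun hzM => ?_⟩
  exact False.elim (hx.2 (hM.out' hm hzM ⟨le_of_lt hx.1, hz.1⟩ : x ∈ M))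

/-- Removing one order-convex set increases the number of components by at most 1. -/
lemma compsSet_diff_step (S M : Set ℝ) (hM : M.OrdConnected) (hfin : (compsSet S).Finite) :
    (compsSet (S \ M)).Finite ∧ (compsSet (S \ M)).ncard ≤ (compsSet S).ncard + 1 := by
  rcases M.eq_empty_or_nonempty with hME | ⟨m, hm⟩
  · rw [hME, diff_empty]
    exact ⟨hfin, Nat.le_succ _⟩
  · set D : Set ℝ := {x | x < m ∧ x ∉ M} with hD
    set U : Set ℝ := {x | m < x ∧ x ∉ M} with hU
    have hDo : D.OrdConnected := lowD_ordConnected M hM m hm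
    have hUo : U.OrdConnected := highU_ordConnected M hM m hm
    set PD : Set (Set ℝ) := {C ∈ compsSet S | (C ∩ D).Nonempty} with hPD
    set PU : Set (Set ℝ) := {C ∈ compsSet S | (C ∩ U).Nonempty} with hPU
    have hPDfin : PD.Finite := hfin.subset (sep_subset _ _)
    have hPUfin : PU.Finite := hfin.subset (sep_subset _ _)
    -- every component of S \ M arises as C ∩ D or C ∩ U
    have hcover : compsSet (S \ M) ⊆ ((· ∩ D) '' PD) ∪ ((· ∩ U) '' PU) := by
      rintro K ⟨z, hz, rfl⟩
      have hzM : z ∉ M := hz.2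
      rcases lt_trichotomy z m with hzm | hzm | hzm
      · left
        have hzD : z ∈ S ∩ D := ⟨hz.1, hzm, hzM⟩
        refine ⟨connectedComponentIn S z, ⟨⟨z, hz.1, rfl⟩, ?_⟩, ?_⟩
        · exact ⟨z, mem_connectedComponentIn hz.1, hzD.2⟩
        · rw [ccIn_diff_eq S M hM m hm D (Or.inl hD) z hzD,
            ccIn_inter_ordConnected S D hDo z hzD]
      · exact absurd (hzm ▸ hm) hzM
      · right
        have hzU : z ∈ S ∩ U := ⟨hz.1, hzm, hzM⟩
        refine ⟨connectedComponentIn S z, ⟨⟨z, hz.1, rfl⟩, ?_⟩, ?_⟩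
        · exact ⟨z, mem_connectedComponentIn hz.1, hzU.2⟩
        · rw [ccIn_diff_eq S M hM m hm U (Or.inr hU) z hzU,
            ccIn_inter_ordConnected S U hUo z hzU]
    -- at most one component meets both sides
    have hsplit : (PD ∩ PU).Subsingleton := by
      rintro C ⟨⟨⟨zc, hzc, hC⟩, ⟨d, hdC, hdD⟩⟩, ⟨-, ⟨u, huC, huU⟩⟩⟩
        C' ⟨⟨⟨zc', hzc', hC'⟩, ⟨d', hdC', hdD'⟩⟩, ⟨-, ⟨u', huC', huU'⟩⟩⟩
      have hCo : C.OrdConnected := by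
        rw [hC]; exact isPreconnected_iff_ordConnected.mp isPreconnected_connectedComponentIn
      have hCo' : C'.OrdConnected := by
        rw [hC']; exact isPreconnected_iff_ordConnected.mp isPreconnected_connectedComponentIn
      have hmC : m ∈ C := hCo.out' hdC huC ⟨le_of_lt hdD.1, le_of_lt huU.1⟩
      have hmC' : m ∈ C' := hCo'.out' hdC' huC' ⟨le_of_lt hdD'.1, le_of_lt huU'.1⟩
      rw [hC] at hmC
      rw [hC'] at hmC'
      rw [hC, hC']
      exact (connectedComponentIn_eq hmC).trans (connectedComponentIn_eq hmC').symm
    have hsig : (PD ∩ PU).ncard ≤ 1 := by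
      rcases (PD ∩ PU).eq_empty_or_nonempty with he | ⟨C, hC⟩
      · simp [he]
      · have : PD ∩ PU ⊆ {C} := fun C' hC' => hsplit hC' hC
        calc (PD ∩ PU).ncard ≤ ({C} : Set (Set ℝ)).ncard :=
              Set.ncard_le_ncard this (finite_singleton C)
          _ = 1 := Set.ncard_singleton C
    have hfin' : (compsSet (S \ M)).Finite :=
      ((hPDfin.image _).union (hPUfin.image _)).subset hcover
    refine ⟨hfin', ?_⟩
    calc (compsSet (S \ M)).ncard
        ≤ (((· ∩ D) '' PD) ∪ ((· ∩ U) '' PU)).ncard :=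
          Set.ncard_le_ncard hcover ((hPDfin.image _).union (hPUfin.image _))
      _ ≤ ((· ∩ D) '' PD).ncard + ((· ∩ U) '' PU).ncard := Set.ncard_union_le _ _
      _ ≤ PD.ncard + PU.ncard :=
          Nat.add_le_add (Set.ncard_image_le hPDfin) (Set.ncard_image_le hPUfin)
      _ = (PD ∩ PU).ncard + (PD ∪ PU).ncard :=
          (Set.ncard_inter_add_ncard_union PD PU hPDfin hPUfin).symm
      _ ≤ 1 + (compsSet S).ncard := by
          refine Nat.add_le_add hsig (Set.ncard_le_ncard ?_ hfin)
          exact union_subset (sep_subset _ _) (sep_subset _ _)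
      _ = (compsSet S).ncard + 1 := Nat.add_comm _ _

/-- An order-convex set minus `i` order-convex sets has at most `i + 1` components. -/
lemma compsSet_convex_diff (A : Set ℝ) (hA : A.OrdConnected) (i : ℕ) (M : ℕ → Set ℝ)
    (hM : ∀ k, (M k).OrdConnected) :
    (compsSet (A \ ⋃ k ∈ Finset.range i, M k)).Finite ∧
      (compsSet (A \ ⋃ k ∈ Finset.range i, M k)).ncard ≤ i + 1 := by
  induction i with
  | zero =>
    simp only [Finset.range_zero, Finset.notMem_empty, iUnion_of_empty, iUnion_empty,
      diff_empty]
    have hsub : compsSet A ⊆ {A} := by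
      rintro K ⟨z, hz, rfl⟩
      exact ((isPreconnected_iff_ordConnected.mpr hA).connectedComponentIn hz : _)
    exact ⟨(finite_singleton A).subset hsub,
      le_trans (Set.ncard_le_ncard hsub (finite_singleton A)) (by simp)⟩
  | succ i ih =>
    have hrw : A \ ⋃ k ∈ Finset.range (i + 1), M k
        = (A \ ⋃ k ∈ Finset.range i, M k) \ M i := by
      rw [Set.diff_diff, Finset.range_add_one, Finset.set_biUnion_insert, union_comm]
    rw [hrw]
    obtain ⟨hf, hc⟩ := compsSet_diff_step _ (M i) (hM i) ih.1
    exact ⟨hf, le_trans hc (Nat.add_le_add ih.2 (le_refl 1))⟩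

lemma comp_mapsTo (a b : ℝ) (f : ℕ → ℝ → ℝ)
    (hmaps : ∀ k, MapsTo (f k) (Icc a b) (Icc a b)) :
    ∀ j, MapsTo (comp f j) (Icc a b) (Icc a b)
  | 0 => fun x hx => hx
  | (j + 1) => (hmaps j).comp (comp_mapsTo a b f hmaps j)

/-- Membership in a `Cword` forces the orbit to avoid the critical sets. -/
lemma mem_Cword_avoid (f : ℕ → ℝ → ℝ) (I : Set ℝ) (δ : ℝ) (hδ : 0 < δ) (v : List Bool)
    (x : ℝ) (hx : x ∈ Cword f I δ v) :
    ∀ j < v.length, comp f j x ∉ crit f I j := by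
  intro j hj
  have h := hx.2 j hj
  have hr : 0 < r f I (j + 1) x := by
    cases hb : v.getD j false with
    | true => exact lt_of_lt_of_le hδ (h.1 hb)
    | false => exact (h.2 hb).1
  have hne : (T f I (j + 1) x ∩ Iio x).Nonempty := by
    by_contra hempty
    rw [not_nonempty_iff_eq_empty] at hempty
    simp only [r, hempty, image_empty, Metric.diam_empty, lt_min_iff, lt_self_iff_false,
      false_and] at hr
  obtain ⟨t, ht⟩ := hne
  obtain ⟨S, hS, htS⟩ := ht.1
  exact hS.2.2.2 j (Nat.lt_succ_self j) x hS.2.2.1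

lemma replicate_getD (m k : ℕ) : (List.replicate m false).getD k false = false := by
  simp only [List.getD_eq_getElem?_getD, List.getElem?_replicate]
  split <;> simp

/-- if a component `J` of `C_δ(a_1,…,a_s,0)` has its further images
avoiding the critical sets, then `C_δ(a_1,…,a_s,0^{i+1})` has at most `i+1`
connected components inside `J`. -/
theorem components_inside_component_without_critical_visits
    (a b : ℝ) (hab : a ≤ b) (f : ℕ → ℝ → ℝ) (p : ℕ)
    (hC1 : ∀ k, ContDiff ℝ 1 (f k))
    (hmaps : ∀ k, MapsTo (f k) (Icc a b) (Icc a b))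
    (hcrit : ∀ k, (crit f (Icc a b) k).Finite ∧ (crit f (Icc a b) k).ncard ≤ p)
    (δ : ℝ) (hδ : 0 < δ) (w : List Bool) (n : ℕ)
    (y₀ : ℝ) (hy₀ : y₀ ∈ Cword f (Icc a b) δ (w ++ [false]))
    (J : Set ℝ) (hJ : J = connectedComponentIn (Cword f (Icc a b) δ (w ++ [false])) y₀)
    (havoid : ∀ i, 1 ≤ i → i ≤ n → ∀ z ∈ J,
      comp f (w.length + i) z ∉ crit f (Icc a b) (w.length + i)) :
    ∀ i, 1 ≤ i → i ≤ n →
      Set.ncard {K : Set ℝ |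
        (∃ z ∈ Cword f (Icc a b) δ (w ++ List.replicate (i + 1) false),
          K = connectedComponentIn (Cword f (Icc a b) δ (w ++ List.replicate (i + 1) false)) z) ∧
        K ⊆ J} ≤ i + 1 := by
  intro i h1i hin
  set I : Set ℝ := Icc a b with hI
  set s := w.length with hs
  set C1 := Cword f I δ (w ++ [false]) with hC1def
  set C' := Cword f I δ (w ++ List.replicate (i + 1) false) with hC'def
  have hlen1 : (w ++ [false]).length = s + 1 := by simp [hs]
  have hlen2 : (w ++ List.replicate (i + 1) false).length = s + i + 1 := by
    simp [← hs]; omega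
  have hJsub : J ⊆ C1 := hJ ▸ connectedComponentIn_subset _ _
  have hJpre : IsPreconnected J := hJ ▸ isPreconnected_connectedComponentIn
  have hJI : J ⊆ I := fun x hx => (hJsub hx).1
  have hy₀J : y₀ ∈ J := hJ ▸ mem_connectedComponentIn hy₀
  -- orbits of points of J avoid the critical sets up to time s + n
  have hJavoid : ∀ m, m ≤ s + 1 + n → ∀ y ∈ J, ∀ j < m, comp f j y ∉ crit f I j := by
    intro m hm y hy j hj
    by_cases hjs : j < s + 1
    · exact mem_Cword_avoid f I δ hδ (w ++ [false]) y (hJsub hy) j (by omega)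
    · have hj1 : 1 ≤ j - s := by omega
      have hj2 : j - s ≤ n := by omega
      have : s + (j - s) = j := by omega
      exact this ▸ havoid (j - s) hj1 hj2 y hy
  -- J belongs to the defining family of T f I m z for z ∈ J, m ≤ s + 1 + n
  have hJT : ∀ m, m ≤ s + 1 + n → ∀ z ∈ J, J ⊆ T f I m z := by
    intro m hm z hz
    exact subset_sUnion_of_mem ⟨hJI, hJpre, hz, fun j hj y hy => hJavoid m hm y hy j hj⟩
  -- T f I m · is constant on J
  have hTconst : ∀ m, m ≤ s + 1 + n → ∀ z ∈ J, ∀ x ∈ J, T f I m x = T f I m z := by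
    have key : ∀ m, m ≤ s + 1 + n → ∀ z ∈ J, ∀ x ∈ J, T f I m x ⊆ T f I m z := by
      intro m hm z hz x hx
      apply subset_sUnion_of_mem
      refine ⟨sUnion_subset fun S hS => hS.1, ?_, hJT m hm x hx hz, ?_⟩
      · exact isPreconnected_sUnion x _ (fun S hS => hS.2.2.1) (fun S hS => hS.2.1)
      · rintro j hj y ⟨S, hS, hyS⟩
        exact hS.2.2.2 j hj y hyS
    exact fun m hm z hz x hx => (key m hm z hz x hx).antisymm (key m hm x hx z hz)
  -- the frozen one-sided diameters
  set 𝒯 : ℕ → Set ℝ := fun k => T f I (s + 1 + k) y₀ with h𝒯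
  set Ld : ℕ → ℝ → ℝ := fun k x => Metric.diam (comp f (s + 1 + k) '' (𝒯 k ∩ Iio x)) with hLd
  set Rd : ℕ → ℝ → ℝ := fun k x => Metric.diam (comp f (s + 1 + k) '' (𝒯 k ∩ Ioi x)) with hRd
  have hrconst : ∀ k, k ≤ n → ∀ x ∈ J, r f I (s + 1 + k) x = min (Ld k x) (Rd k x) := by
    intro k hk x hx
    have hT := hTconst (s + 1 + k) (by omega) y₀ hy₀J x hx
    simp only [r, hT, hLd, hRd, h𝒯]
  have h𝒯I : ∀ k, 𝒯 k ⊆ I := fun k => sUnion_subset fun S hS => hS.1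
  have hbd : ∀ k (s' : Set ℝ), s' ⊆ 𝒯 k → Bornology.IsBounded (comp f (s + 1 + k) '' s') := by
    intro k s' hs'
    apply (Metric.isBounded_Icc a b).subset
    rintro _ ⟨y, hy, rfl⟩
    exact comp_mapsTo a b f hmaps (s + 1 + k) (h𝒯I k (hs' hy))
  have hLmono : ∀ k, Monotone (Ld k) := by
    intro k x y hxy
    exact Metric.diam_mono
      (image_mono (inter_subset_inter_right _ (Iio_subset_Iio hxy)))
      (hbd k _ inter_subset_left)
  have hRanti : ∀ k, Antitone (Rd k) := by
    intro k x y hxy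
    exact Metric.diam_mono
      (image_mono (inter_subset_inter_right _ (Ioi_subset_Ioi hxy)))
      (hbd k _ inter_subset_left)
  -- the convex sets
  set A : Set ℝ := J ∩ ⋂ k ∈ Finset.range i, {x | 0 < Ld (k + 1) x ∧ 0 < Rd (k + 1) x}
    with hA
  set M : ℕ → Set ℝ := fun k => {x | δ ≤ Ld (k + 1) x ∧ δ ≤ Rd (k + 1) x} with hM
  have hAo : A.OrdConnected := by
    apply Set.OrdConnected.inter (isPreconnected_iff_ordConnected.mp hJpre)
    refine Set.ordConnected_iInter fun k => Set.ordConnected_iInter fun hk => ?_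
    constructor
    intro x hx y hy z hz
    exact ⟨lt_of_lt_of_le hx.1 (hLmono _ hz.1), lt_of_lt_of_le hy.2 (hRanti _ hz.2)⟩
  have hMo : ∀ k, (M k).OrdConnected := by
    intro k
    constructor
    intro x hx y hy z hz
    exact ⟨le_trans hx.1 (hLmono _ hz.1), le_trans hy.2 (hRanti _ hz.2)⟩
  -- the key identity
  have hkey : C' ∩ J = A \ ⋃ k ∈ Finset.range i, M k := by
    ext x
    simp only [mem_inter_iff, mem_diff, hA, hM, mem_iInter, mem_setOf_eq, mem_iUnion,
      Finset.mem_range, not_exists]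
    constructor
    · rintro ⟨hxC', hxJ⟩
      have hcond : ∀ k, k < i → 0 < min (Ld (k + 1) x) (Rd (k + 1) x) ∧
          min (Ld (k + 1) x) (Rd (k + 1) x) < δ := by
        intro k hk
        have hj : s + k + 1 < (w ++ List.replicate (i + 1) false).length := by
          rw [hlen2]; omega
        have hgd : (w ++ List.replicate (i + 1) false).getD (s + k + 1) false = false := by
          rw [List.getD_append_right w _ false (s + k + 1) (by omega), ← hs]
          have : s + k + 1 - s = k + 1 := by omega
          rw [this, replicate_getD]
        have h := (hxC'.2 (s + k + 1) hj).2 hgd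
        have heq : r f I (s + k + 1 + 1) x = min (Ld (k + 1) x) (Rd (k + 1) x) := by
          have := hrconst (k + 1) (by omega) x hxJ
          have harith : s + 1 + (k + 1) = s + k + 1 + 1 := by omega
          rw [harith] at this
          exact this
        rw [heq] at h
        exact h
      refine ⟨⟨hxJ, fun k hk => ?_⟩, fun k hk hMk => ?_⟩
      · have := (hcond k hk).1
        rw [lt_min_iff] at this
        exact this
      · have := (hcond k hk).2
        rw [min_lt_iff] at this
        rcases this with h | h
        · exact absurd hMk.1 (not_le.mpr h)
        · exact absurd hMk.2 (not_le.mpr h)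
    · rintro ⟨⟨hxJ, hpos⟩, hnM⟩
      refine ⟨⟨hJI hxJ, ?_⟩, hxJ⟩
      intro j hj
      rw [hlen2] at hj
      by_cases hjs : j < s + 1
      · have hgd : (w ++ List.replicate (i + 1) false).getD j false
            = (w ++ [false]).getD j false := by
          by_cases hjw : j < s
          · rw [List.getD_append w _ false j (by omega), List.getD_append w _ false j (by omega)]
          · have hjeq : j = s := by omega
            rw [hjeq, List.getD_append_right w _ false s (by omega),
              List.getD_append_right w [false] false s (by omega)]
            have h0 : s - w.length = 0 := by omega
            rw [h0]
            simp [replicate_getD]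
        rw [hgd]
        exact (hJsub hxJ).2 j (by rw [hlen1]; omega)
      · have hk : j - s - 1 < i := by omega
        have hgd : (w ++ List.replicate (i + 1) false).getD j false = false := by
          rw [List.getD_append_right w _ false j (by omega), ← hs, replicate_getD]
        rw [hgd]
        have heq : r f I (j + 1) x = min (Ld (j - s - 1 + 1) x) (Rd (j - s - 1 + 1) x) := by
          have := hrconst (j - s - 1 + 1) (by omega) x hxJ
          have harith : s + 1 + (j - s - 1 + 1) = j + 1 := by omega
          rw [harith] at this
          exact this
        constructor
        · intro hfalse; exact absurd hfalse (by simp)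
        · intro _
          rw [heq]
          have hp := hpos (j - s - 1) hk
          have hm := hnM (j - s - 1) hk
          rw [not_and_or, not_le, not_le] at hm
          constructor
          · rw [lt_min_iff]; exact hp
          · rw [min_lt_iff]; exact hm
  -- conclude
  obtain ⟨hfinC, hcard⟩ := compsSet_convex_diff A hAo i M hMo
  rw [← hkey] at hfinC hcard
  have hsub : {K : Set ℝ | (∃ z ∈ C', K = connectedComponentIn C' z) ∧ K ⊆ J}
      ⊆ compsSet (C' ∩ J) := by
    rintro K ⟨⟨z, hzC, rfl⟩, hKJ⟩
    have hzK : z ∈ connectedComponentIn C' z := mem_connectedComponentIn hzC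
    refine ⟨z, ⟨hzC, hKJ hzK⟩, ?_⟩
    apply subset_antisymm
    · exact isPreconnected_connectedComponentIn.subset_connectedComponentIn hzK
        (subset_inter (connectedComponentIn_subset _ _) hKJ)
    · exact connectedComponentIn_mono z inter_subset_left
  exact le_trans (Set.ncard_le_ncard hsub hfinC) hcard
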